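/- Under the complier IV setting (consistency for treatment and outcome, exclusion restriction, causal IV, IV positivity, monotonicity, and P(C) > 0), the compliers' value function is nonparametrically identified: for every treatment regime 𝒟, E[ Z·A·Y·1{A=𝒟(L)} / f(Z|L) ] = P(A₁ > A₋₁) · 𝒱_c(𝒟); equivalently, 𝒱_c(𝒟) = E[ Z·A·Y·1{A=𝒟(L)} / ( P(A₁>A₋₁) · f(Z|L) ) ]. (Theorem 4.) -/

import Mathlib

open MeasureTheory ProbabilityTheory
open scoped ENNReal NNReal

/-- The σ-algebra on `Ω` generated by a random variable. -/
def mOf {Ω 𝓛 : Type*} [MeasurableSpace 𝓛] (L : Ω → 𝓛) : MeasurableSpace Ω :=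
  MeasurableSpace.comap L inferInstance


section Helpers

variable {Ω : Type*} {m' : MeasurableSpace Ω} [mΩ : MeasurableSpace Ω]
  {μ : Measure Ω} [IsProbabilityMeasure μ]

omit [IsProbabilityMeasure μ] in
lemma CVI.integral_withDensity_ofReal {g k : Ω → ℝ} (hg : Measurable g)
    (hgnn : ∀ᵐ ω ∂μ, 0 ≤ g ω) :
    ∫ ω, k ω ∂(μ.withDensity fun ω => ENNReal.ofReal (g ω)) = ∫ ω, g ω * k ω ∂μ := by
  rw [show (fun ω => ENNReal.ofReal (g ω)) = fun ω => ((g ω).toNNReal : ℝ≥0∞) from rfl,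
    integral_withDensity_eq_integral_smul hg.real_toNNReal k]
  refine integral_congr_ae ?_
  filter_upwards [hgnn] with ω hω
  simp [NNReal.smul_def, Real.coe_toNNReal _ hω]

/-- The trimmed `withDensity` measures of a nonnegative integrable function and of its
conditional expectation coincide. -/
lemma CVI.trim_withDensity_condexp (hm : m' ≤ mΩ) (X : Ω → ℝ)
    (hXnn : ∀ ω, 0 ≤ X ω) (hXint : Integrable X μ) :
    (μ.withDensity fun ω => ENNReal.ofReal (X ω)).trim hm
      = (μ.withDensity fun ω => ENNReal.ofReal ((μ[X|m']) ω)).trim hm := by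
  refine @Measure.ext Ω m' _ _ fun S hS => ?_
  rw [trim_measurableSet_eq hm hS, trim_measurableSet_eq hm hS,
    withDensity_apply _ (hm S hS), withDensity_apply _ (hm S hS)]
  have h1 : ∫⁻ ω in S, ENNReal.ofReal (X ω) ∂μ = ENNReal.ofReal (∫ ω in S, X ω ∂μ) :=
    (ofReal_integral_eq_lintegral_ofReal hXint.restrict
      (Filter.Eventually.of_forall hXnn)).symm
  have h2 : ∫⁻ ω in S, ENNReal.ofReal ((μ[X|m']) ω) ∂μ
      = ENNReal.ofReal (∫ ω in S, (μ[X|m']) ω ∂μ) :=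
    (ofReal_integral_eq_lintegral_ofReal integrable_condExp.restrict
      (ae_restrict_of_ae (condExp_nonneg (Filter.Eventually.of_forall hXnn)))).symm
  rw [h1, h2, setIntegral_condExp hm hXint hS]

/-- Pull-out identity for an `m'`-measurable factor against a nonnegative integrable
function, with no integrability assumption on the product. -/
lemma CVI.pullout_integral (hm : m' ≤ mΩ) (k X : Ω → ℝ)
    (hk : Measurable[m'] k) (hX : Measurable X) (hXnn : ∀ ω, 0 ≤ X ω)
    (hXint : Integrable X μ) :
    ∫ ω, k ω * X ω ∂μ = ∫ ω, k ω * (μ[X|m']) ω ∂μ := by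
  rw [show (fun ω : Ω => k ω * X ω) = fun ω => X ω * k ω from funext fun _ => mul_comm _ _,
    show (fun ω : Ω => k ω * (μ[X|m']) ω) = fun ω => (μ[X|m']) ω * k ω from
      funext fun _ => mul_comm _ _,
    ← CVI.integral_withDensity_ofReal hX (Filter.Eventually.of_forall hXnn),
    ← CVI.integral_withDensity_ofReal (stronglyMeasurable_condExp.mono hm).measurable
      (condExp_nonneg (Filter.Eventually.of_forall hXnn)),
    integral_trim hm hk.stronglyMeasurable, integral_trim hm hk.stronglyMeasurable,
    CVI.trim_withDensity_condexp hm X hXnn hXint]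

/-- Integrability transfer along the pull-out identity. -/
lemma CVI.pullout_integrable (hm : m' ≤ mΩ) (k X : Ω → ℝ)
    (hk : Measurable[m'] k) (hX : Measurable X) (hXnn : ∀ ω, 0 ≤ X ω)
    (hXint : Integrable X μ)
    (h : Integrable (fun ω => k ω * (μ[X|m']) ω) μ) :
    Integrable (fun ω => k ω * X ω) μ := by
  have hXm : Measurable fun ω => ENNReal.ofReal (X ω) := hX.ennreal_ofReal
  have hCm : Measurable fun ω => ENNReal.ofReal ((μ[X|m']) ω) :=
    (stronglyMeasurable_condExp.mono hm).measurable.ennreal_ofReal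
  have hlt : ∀ᵐ ω ∂μ, ENNReal.ofReal (X ω) < ∞ :=
    Filter.Eventually.of_forall fun ω => ENNReal.ofReal_lt_top
  have hlt' : ∀ᵐ ω ∂μ, ENNReal.ofReal ((μ[X|m']) ω) < ∞ :=
    Filter.Eventually.of_forall fun ω => ENNReal.ofReal_lt_top
  have h2 : Integrable k (μ.withDensity fun ω => ENNReal.ofReal ((μ[X|m']) ω)) := by
    rw [integrable_withDensity_iff hCm hlt']
    refine h.congr ?_
    filter_upwards [condExp_nonneg (μ := μ) (m := m') (f := X)
      (Filter.Eventually.of_forall hXnn)] with ω hω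
    rw [ENNReal.toReal_ofReal hω]
  have h3 : Integrable k
      ((μ.withDensity fun ω => ENNReal.ofReal ((μ[X|m']) ω)).trim hm) :=
    h2.trim hm hk.stronglyMeasurable
  rw [← CVI.trim_withDensity_condexp hm X hXnn hXint] at h3
  have h4 : Integrable k (μ.withDensity fun ω => ENNReal.ofReal (X ω)) :=
    integrable_of_integrable_trim hm h3
  rw [integrable_withDensity_iff hXm hlt] at h4
  refine h4.congr (Filter.Eventually.of_forall fun ω => ?_)
  show k ω * (ENNReal.ofReal (X ω)).toReal = k ω * X ω
  rw [ENNReal.toReal_ofReal (hXnn ω)]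

/-- Pull-out integral identity via the conditional expectation. -/
lemma CVI.integral_mul_condexp (hm : m' ≤ mΩ) (k X : Ω → ℝ)
    (hk : StronglyMeasurable[m'] k) (hX : Integrable X μ)
    (hkX : Integrable (fun ω => k ω * X ω) μ) :
    ∫ ω, k ω * X ω ∂μ = ∫ ω, k ω * (μ[X|m']) ω ∂μ := by
  have h := condExp_mul_of_stronglyMeasurable_left hk (show Integrable (k * X) μ from hkX) hX
  rw [show (fun ω => k ω * X ω) = k * X from rfl,
    ← integral_condExp (μ := μ) hm (f := k * X)]
  exact integral_congr_ae h

end Helpers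

/-- The key consequence of conditional independence: reweighting by the indicator of
`{Z = z}` divided by the conditional density is integral-preserving on `σ(W, L)`-measurable
functions. -/
lemma CVI.main_indep_lemma {Ω 𝓛 β : Type*} [mΩ : MeasurableSpace Ω] [StandardBorelSpace Ω]
    [MeasurableSpace 𝓛] [MeasurableSpace β]
    (μ : Measure Ω) [IsProbabilityMeasure μ]
    (L : Ω → 𝓛) (Z : Ω → ℝ) (W : Ω → β)
    (hL : Measurable L) (hZ : Measurable Z) (hW : Measurable W)
    (hindep : CondIndepFun (mOf L) hL.comap_le Z W μ)
    (z : ℝ) (f : 𝓛 → ℝ) (hf : Measurable f)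
    (hfcond : (μ[(fun ω => if Z ω = z then (1:ℝ) else 0) | mOf L]) =ᵐ[μ] fun ω => f (L ω))
    (hfnn : ∀ᵐ ω ∂μ, 0 ≤ f (L ω))
    (ξ : Ω → ℝ) (hξ : Measurable[mOf (fun ω => (W ω, L ω))] ξ) :
    ∫ ω, (if Z ω = z then (1:ℝ) else 0) * ξ ω ∂μ = ∫ ω, f (L ω) * ξ ω ∂μ := by
  have hm' : mOf L ≤ mΩ := hL.comap_le
  have hpair : Measurable fun ω => (W ω, L ω) := hW.prodMk hL
  have hm : mOf (fun ω => (W ω, L ω)) ≤ mΩ := hpair.comap_le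
  have hLm' : Measurable[mOf L] L := fun s hs => ⟨s, hs, rfl⟩
  have hfL : Integrable (fun ω => f (L ω)) μ := integrable_condExp.congr hfcond
  have hmul : ∀ (s : Set ℝ) (t : Set β), MeasurableSet s → MeasurableSet t →
      (μ⟦Z ⁻¹' s ∩ W ⁻¹' t | mOf L⟧) =ᵐ[μ]
        fun ω => (μ⟦Z ⁻¹' s | mOf L⟧) ω * (μ⟦W ⁻¹' t | mOf L⟧) ω :=
    (condIndepFun_iff_condExp_inter_preimage_eq_mul
      (hm' := hL.comap_le) hZ hW).mp hindep
  set ι : Ω → ℝ := fun ω => if Z ω = z then 1 else 0 with hιdef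
  have hι_eq : Set.indicator (Z ⁻¹' {z}) (fun _ => (1:ℝ)) = ι := by
    funext ω
    by_cases h : Z ω = z <;>
      simp [Set.indicator_apply, Set.mem_preimage, Set.mem_singleton_iff, h, hιdef]
  have hιnn : ∀ ω, 0 ≤ ι ω := by
    intro ω; by_cases h : Z ω = z <;> simp [hιdef, h]
  have hιmeas : Measurable ι := by
    rw [← hι_eq]; exact measurable_const.indicator (hZ (measurableSet_singleton z))
  have hιint : Integrable ι μ := by
    rw [← hι_eq]; exact (integrable_const 1).indicator (hZ (measurableSet_singleton z))
  set ν₁ : Measure Ω := μ.withDensity fun ω => ENNReal.ofReal (ι ω) with hν₁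
  set ν₂ : Measure Ω := μ.withDensity fun ω => ENNReal.ofReal (f (L ω)) with hν₂
  have key : ∀ t v, MeasurableSet t → MeasurableSet v →
      ν₁ (W ⁻¹' t ∩ L ⁻¹' v) = ν₂ (W ⁻¹' t ∩ L ⁻¹' v) := by
    intro t v ht hv
    have hT : MeasurableSet (W ⁻¹' t) := hW ht
    have hu : MeasurableSet (L ⁻¹' v) := hL hv
    have hum : MeasurableSet[mOf L] (L ⁻¹' v) := ⟨v, hv, rfl⟩
    have hS : MeasurableSet (W ⁻¹' t ∩ L ⁻¹' v) := hT.inter hu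
    have hXTnn : ∀ ω, 0 ≤ Set.indicator (W ⁻¹' t) (fun _ => (1:ℝ)) ω :=
      fun ω => Set.indicator_nonneg (fun _ _ => zero_le_one) ω
    have hXTmeas : Measurable (Set.indicator (W ⁻¹' t) fun _ => (1:ℝ)) :=
      measurable_const.indicator hT
    have hXTint : Integrable (Set.indicator (W ⁻¹' t) fun _ => (1:ℝ)) μ :=
      (integrable_const 1).indicator hT
    have hZTint : Integrable (Set.indicator (Z ⁻¹' {z} ∩ W ⁻¹' t) fun _ => (1:ℝ)) μ :=
      (integrable_const 1).indicator ((hZ (measurableSet_singleton z)).inter hT)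
    have hreal : ∫ ω in W ⁻¹' t ∩ L ⁻¹' v, ι ω ∂μ
        = ∫ ω in W ⁻¹' t ∩ L ⁻¹' v, f (L ω) ∂μ := by
      have c0 : ∫ ω in W ⁻¹' t ∩ L ⁻¹' v, ι ω ∂μ
          = ∫ ω in L ⁻¹' v, Set.indicator (Z ⁻¹' {z} ∩ W ⁻¹' t) (fun _ => (1:ℝ)) ω ∂μ := by
        have hset : (W ⁻¹' t ∩ L ⁻¹' v) ∩ Z ⁻¹' {z}
            = L ⁻¹' v ∩ (Z ⁻¹' {z} ∩ W ⁻¹' t) := by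
          ext ω; simp only [Set.mem_inter_iff]; tauto
        rw [← hι_eq, setIntegral_indicator (hZ (measurableSet_singleton z)),
          setIntegral_indicator ((hZ (measurableSet_singleton z)).inter hT), hset]
      have c1 : ∫ ω in L ⁻¹' v, Set.indicator (Z ⁻¹' {z} ∩ W ⁻¹' t) (fun _ => (1:ℝ)) ω ∂μ
          = ∫ ω in L ⁻¹' v, (μ⟦Z ⁻¹' {z} ∩ W ⁻¹' t | mOf L⟧) ω ∂μ :=
        (setIntegral_condExp hm' hZTint hum).symm
      have c2 : ∫ ω in L ⁻¹' v, (μ⟦Z ⁻¹' {z} ∩ W ⁻¹' t | mOf L⟧) ω ∂μ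
          = ∫ ω in L ⁻¹' v, f (L ω) * (μ⟦W ⁻¹' t | mOf L⟧) ω ∂μ := by
        refine setIntegral_congr_ae hu ?_
        have hfcond' : (μ⟦Z ⁻¹' {z} | mOf L⟧) =ᵐ[μ] fun ω => f (L ω) := by
          rw [hι_eq]; exact hfcond
        filter_upwards [hmul {z} t (measurableSet_singleton z) ht, hfcond'] with ω h1 h2 _
        rw [h1, h2]
      have c3 : ∫ ω in L ⁻¹' v, f (L ω) * (μ⟦W ⁻¹' t | mOf L⟧) ω ∂μ
          = ∫ ω, (Set.indicator (L ⁻¹' v) (fun _ => (1:ℝ)) ω * f (L ω))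
              * (μ⟦W ⁻¹' t | mOf L⟧) ω ∂μ := by
        rw [← integral_indicator hu]
        refine integral_congr_ae (Filter.Eventually.of_forall fun ω => ?_)
        by_cases hω : ω ∈ L ⁻¹' v <;> simp [Set.indicator_apply, hω]
      have hk : Measurable[mOf L] fun ω =>
          Set.indicator (L ⁻¹' v) (fun _ => (1:ℝ)) ω * f (L ω) :=
        (measurable_const.indicator hum).mul (hf.comp hLm')
      have c4 := (CVI.pullout_integral hm'
        (fun ω => Set.indicator (L ⁻¹' v) (fun _ => (1:ℝ)) ω * f (L ω))
        (Set.indicator (W ⁻¹' t) fun _ => (1:ℝ)) hk hXTmeas hXTnn hXTint).symm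
      have c5 : ∫ ω, (Set.indicator (L ⁻¹' v) (fun _ => (1:ℝ)) ω * f (L ω))
            * Set.indicator (W ⁻¹' t) (fun _ => (1:ℝ)) ω ∂μ
          = ∫ ω in W ⁻¹' t ∩ L ⁻¹' v, f (L ω) ∂μ := by
        rw [← integral_indicator hS]
        refine integral_congr_ae (Filter.Eventually.of_forall fun ω => ?_)
        by_cases h1 : ω ∈ W ⁻¹' t <;> by_cases h2 : ω ∈ L ⁻¹' v <;>
          simp [Set.indicator_apply, h1, h2]
      rw [c0, c1, c2, c3, c4, c5]
    rw [hν₁, hν₂, withDensity_apply _ hS, withDensity_apply _ hS,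
      ← ofReal_integral_eq_lintegral_ofReal hιint.restrict
        (Filter.Eventually.of_forall hιnn),
      ← ofReal_integral_eq_lintegral_ofReal hfL.restrict (ae_restrict_of_ae hfnn),
      hreal]
  have hν₁fin : IsFiniteMeasure ν₁ := by
    refine isFiniteMeasure_withDensity (ne_of_lt ?_)
    calc ∫⁻ ω, ENNReal.ofReal (ι ω) ∂μ ≤ ∫⁻ _, 1 ∂μ := by
          refine lintegral_mono fun ω => ?_
          by_cases h : Z ω = z <;> simp [hιdef, h]
      _ < ∞ := by simp
  have hν₂fin : IsFiniteMeasure ν₂ := by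
    refine isFiniteMeasure_withDensity ?_
    rw [← ofReal_integral_eq_lintegral_ofReal hfL hfnn]
    exact ENNReal.ofReal_ne_top
  have hext : ν₁.trim hm = ν₂.trim hm := by
    have hgen : (mOf fun ω => (W ω, L ω)) = MeasurableSpace.generateFrom
        (Set.preimage (fun ω => (W ω, L ω)) ''
          Set.image2 (· ×ˢ ·) { s : Set β | MeasurableSet s }
            { t : Set 𝓛 | MeasurableSet t }) := by
      rw [mOf, show (inferInstance : MeasurableSpace (β × 𝓛)) = Prod.instMeasurableSpace
          from rfl,
        ← generateFrom_prod, MeasurableSpace.comap_generateFrom]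
    have hpi : IsPiSystem (Set.preimage (fun ω => (W ω, L ω)) ''
        Set.image2 (· ×ˢ ·) { s : Set β | MeasurableSet s } { t : Set 𝓛 | MeasurableSet t }) :=
      IsPiSystem.comap isPiSystem_prod _
    refine ext_of_generate_finite _ hgen hpi ?_ ?_
    · rintro S ⟨R, hR, rfl⟩
      rw [Set.mem_image2] at hR
      obtain ⟨t, ht, v, hv, rfl⟩ := hR
      have hSm : MeasurableSet[mOf fun ω => (W ω, L ω)]
          ((fun ω => (W ω, L ω)) ⁻¹' (t ×ˢ v)) := ⟨t ×ˢ v, ht.prod hv, rfl⟩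
      rw [trim_measurableSet_eq hm hSm, trim_measurableSet_eq hm hSm,
        Set.mk_preimage_prod]
      exact key t v ht hv
    · rw [trim_measurableSet_eq hm MeasurableSet.univ,
        trim_measurableSet_eq hm MeasurableSet.univ]
      have := key Set.univ Set.univ MeasurableSet.univ MeasurableSet.univ
      simpa using this
  calc ∫ ω, ι ω * ξ ω ∂μ = ∫ ω, ξ ω ∂ν₁ :=
        (CVI.integral_withDensity_ofReal hιmeas (Filter.Eventually.of_forall hιnn)).symm
    _ = ∫ ω, ξ ω ∂(ν₁.trim hm) := integral_trim hm hξ.stronglyMeasurable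
    _ = ∫ ω, ξ ω ∂(ν₂.trim hm) := by rw [hext]
    _ = ∫ ω, ξ ω ∂ν₂ := (integral_trim hm hξ.stronglyMeasurable).symm
    _ = ∫ ω, f (L ω) * ξ ω ∂μ :=
        CVI.integral_withDensity_ofReal (hf.comp hL) hfnn

/-- **Theorem 4.** Under the complier IV setting (consistency, exclusion restriction,
causal IV, IV positivity, monotonicity, `P(C) > 0`), the compliers' value function is
nonparametrically identified: for every regime `D`,
`E[Z·A·Y·1{A=D(L)}/f(Z|L)] = P(A₁>A₋₁) · 𝒱_c(D)`, equivalently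
`𝒱_c(D) = E[Z·A·Y·1{A=D(L)}/(P(A₁>A₋₁)·f(Z|L))]`. -/
theorem complier_value_identification
    {Ω 𝓛 : Type*} [MeasurableSpace Ω] [StandardBorelSpace Ω]
    [MeasurableSpace 𝓛] [StandardBorelSpace 𝓛]
    (μ : Measure Ω) [IsProbabilityMeasure μ]
    (L : Ω → 𝓛) (Z A A1 Am1 Y Y1 Ym1 : Ω → ℝ)
    (hL : Measurable L) (hZ : Measurable Z) (hA : Measurable A)
    (hA1 : Measurable A1) (hAm1 : Measurable Am1)
    (hYm : Measurable Y) (hY1m : Measurable Y1) (hYm1m : Measurable Ym1)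
    (hZval : ∀ ω, Z ω = 1 ∨ Z ω = -1) (hAval : ∀ ω, A ω = 1 ∨ A ω = -1)
    (hA1val : ∀ ω, A1 ω = 1 ∨ A1 ω = -1) (hAm1val : ∀ ω, Am1 ω = 1 ∨ Am1 ω = -1)
    (hY1int : Integrable Y1 μ) (hYm1int : Integrable Ym1 μ) (hYint : Integrable Y μ)
    -- consistency for treatment: A = A₁·1{Z=1} + A₋₁·1{Z=−1} a.s.
    (hconsA : ∀ᵐ ω ∂μ, A ω = A1 ω * (if Z ω = 1 then 1 else 0)
        + Am1 ω * (if Z ω = -1 then 1 else 0))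
    -- consistency for outcome (encodes the exclusion restriction)
    (hconsY : ∀ᵐ ω ∂μ, Y ω = Y1 ω * (if A ω = 1 then 1 else 0)
        + Ym1 ω * (if A ω = -1 then 1 else 0))
    -- causal IV: Z ⫫ (A₁, A₋₁, Y₁, Y₋₁) | L
    (hcausal : CondIndepFun (mOf L) hL.comap_le Z
        (fun ω => (A1 ω, Am1 ω, Y1 ω, Ym1 ω)) μ)
    -- f(z|L) and IV positivity
    (fZ : ℝ → 𝓛 → ℝ) (hfZmeas : ∀ z, Measurable (fZ z))
    (hfZ : ∀ z ∈ ({1, -1} : Set ℝ),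
      (μ[(fun ω => if Z ω = z then (1 : ℝ) else 0) | mOf L])
        =ᵐ[μ] fun ω => fZ z (L ω))
    (c : ℝ) (hc : 0 < c)
    (hpos : ∀ᵐ ω ∂μ, c ≤ fZ 1 (L ω) ∧ fZ 1 (L ω) ≤ 1 - c)
    -- monotonicity: no defiers
    (hmono : ∀ᵐ ω ∂μ, Am1 ω ≤ A1 ω)
    -- P(C) > 0, where C = {A₁ = 1, A₋₁ = −1} = {A₁ > A₋₁}
    (hPC : 0 < ∫ ω, (if A1 ω = 1 then (1 : ℝ) else 0) * (if Am1 ω = -1 then 1 else 0) ∂μ)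
    -- E[Y₁|C,L] and E[Y₋₁|C,L], defined by the usual factorization against P(C|L)
    (gY1C gYm1C : 𝓛 → ℝ) (hgY1Cm : Measurable gY1C) (hgYm1Cm : Measurable gYm1C)
    (hgY1C : (μ[(fun ω => Y1 ω * ((if A1 ω = 1 then (1 : ℝ) else 0) *
          (if Am1 ω = -1 then 1 else 0))) | mOf L])
        =ᵐ[μ] fun ω => gY1C (L ω) *
          (μ[(fun ω' => (if A1 ω' = 1 then (1 : ℝ) else 0) *
            (if Am1 ω' = -1 then 1 else 0)) | mOf L]) ω)
    (hgYm1C : (μ[(fun ω => Ym1 ω * ((if A1 ω = 1 then (1 : ℝ) else 0) *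
          (if Am1 ω = -1 then 1 else 0))) | mOf L])
        =ᵐ[μ] fun ω => gYm1C (L ω) *
          (μ[(fun ω' => (if A1 ω' = 1 then (1 : ℝ) else 0) *
            (if Am1 ω' = -1 then 1 else 0)) | mOf L]) ω)
    -- a treatment regime
    (D : 𝓛 → ℝ) (hD : Measurable D) (hDval : ∀ l, D l = 1 ∨ D l = -1) :
    -- E[Z·A·Y·1{A=D(L)}/f(Z|L)] = P(C) · 𝒱_c(D)
    ((∫ ω, Z ω * A ω * Y ω * (if A ω = D (L ω) then 1 else 0) / fZ (Z ω) (L ω) ∂μ)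
      = (∫ ω, (if A1 ω = 1 then (1 : ℝ) else 0) * (if Am1 ω = -1 then 1 else 0) ∂μ) *
        ((∫ ω, ((if D (L ω) = 1 then (1 : ℝ) else 0) * gY1C (L ω)
            + (if D (L ω) = -1 then 1 else 0) * gYm1C (L ω)) *
            ((if A1 ω = 1 then (1 : ℝ) else 0) * (if Am1 ω = -1 then 1 else 0)) ∂μ) /
          ∫ ω, (if A1 ω = 1 then (1 : ℝ) else 0) * (if Am1 ω = -1 then 1 else 0) ∂μ))
    ∧ -- equivalently, 𝒱_c(D) = E[Z·A·Y·1{A=D(L)}/(P(C)·f(Z|L))]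
    ((∫ ω, ((if D (L ω) = 1 then (1 : ℝ) else 0) * gY1C (L ω)
          + (if D (L ω) = -1 then 1 else 0) * gYm1C (L ω)) *
          ((if A1 ω = 1 then (1 : ℝ) else 0) * (if Am1 ω = -1 then 1 else 0)) ∂μ) /
        (∫ ω, (if A1 ω = 1 then (1 : ℝ) else 0) * (if Am1 ω = -1 then 1 else 0) ∂μ)
      = ∫ ω, Z ω * A ω * Y ω * (if A ω = D (L ω) then 1 else 0) /
          ((∫ ω', (if A1 ω' = 1 then (1 : ℝ) else 0) * (if Am1 ω' = -1 then 1 else 0) ∂μ) *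
            fZ (Z ω) (L ω)) ∂μ) := by
  classical
  have h1ne : (1:ℝ) ≠ -1 := by norm_num
  have hm1ne : (-1:ℝ) ≠ 1 := by norm_num
  have hm' : mOf L ≤ ‹MeasurableSpace Ω› := hL.comap_le
  have hLm' : Measurable[mOf L] L := fun s hs => ⟨s, hs, rfl⟩
  -- measurability of indicators
  have hiteM : ∀ {m0 : MeasurableSpace Ω} (g : Ω → ℝ) (r : ℝ), Measurable[m0] g →
      Measurable[m0] (fun ω => if g ω = r then (1:ℝ) else 0) := by
    intro m0 g r hg
    exact Measurable.ite (hg (measurableSet_singleton r)) measurable_const measurable_const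
  have hiteB : ∀ (g : Ω → ℝ) (r : ℝ) (x : Ω), ‖(if g x = r then (1:ℝ) else 0)‖ ≤ 1 := by
    intro g r x; by_cases h : g x = r <;> simp [h]
  have hbint : ∀ (b : Ω → ℝ), Measurable b → (∀ x, ‖b x‖ ≤ 1) → Integrable b μ :=
    fun b hb hbb => Integrable.mono' (integrable_const 1) hb.aestronglyMeasurable
      (Filter.Eventually.of_forall hbb)
  -- facts about fZ
  have hf1 := hfZ 1 (by simp)
  have hfm1 := hfZ (-1) (by simp)
  have hι1int : Integrable (fun ω => if Z ω = 1 then (1:ℝ) else 0) μ :=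
    hbint _ (hiteM Z 1 hZ) (hiteB Z 1)
  have hιm1int : Integrable (fun ω => if Z ω = -1 then (1:ℝ) else 0) μ :=
    hbint _ (hiteM Z (-1) hZ) (hiteB Z (-1))
  have hsum : ∀ᵐ ω ∂μ, fZ 1 (L ω) + fZ (-1) (L ω) = 1 := by
    have hadd := condExp_add (μ := μ) (m := mOf L) hι1int hιm1int
    have hone : ((fun ω => if Z ω = 1 then (1:ℝ) else 0)
        + fun ω => if Z ω = -1 then (1:ℝ) else 0) =ᵐ[μ] fun _ => (1:ℝ) :=
      Filter.Eventually.of_forall fun ω => by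
        rcases hZval ω with h | h <;> simp [Pi.add_apply, h, h1ne, hm1ne]
    have hcongr := condExp_congr_ae (μ := μ) (m := mOf L) hone
    rw [condExp_const hm' (1:ℝ)] at hcongr
    filter_upwards [hadd, hcongr, hf1, hfm1] with ω ha hcg hh1 hh2
    rw [← hh1, ← hh2, ← Pi.add_apply, ← ha, hcg]
  have hfm1pos : ∀ᵐ ω ∂μ, c ≤ fZ (-1) (L ω) ∧ fZ (-1) (L ω) ≤ 1 - c := by
    filter_upwards [hsum, hpos] with ω h1 h2
    exact ⟨by linarith [h2.2], by linarith [h2.1]⟩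
  have hf1nn : ∀ᵐ ω ∂μ, 0 ≤ fZ 1 (L ω) := by
    filter_upwards [hpos] with ω h; linarith [h.1]
  have hfm1nn : ∀ᵐ ω ∂μ, 0 ≤ fZ (-1) (L ω) := by
    filter_upwards [hfm1pos] with ω h; linarith [h.1]
  -- the two potential-outcome contrast functions
  set η₁ : Ω → ℝ := fun ω => (if A1 ω = 1 then (1:ℝ) else 0) * (if D (L ω) = 1 then 1 else 0)
      * Y1 ω - (if A1 ω = -1 then (1:ℝ) else 0) * (if D (L ω) = -1 then 1 else 0) * Ym1 ω
    with hη₁def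
  set η₂ : Ω → ℝ := fun ω => (if Am1 ω = 1 then (1:ℝ) else 0) * (if D (L ω) = 1 then 1 else 0)
      * Y1 ω - (if Am1 ω = -1 then (1:ℝ) else 0) * (if D (L ω) = -1 then 1 else 0) * Ym1 ω
    with hη₂def
  -- pointwise split of the integrand
  have hsplit : (fun ω => Z ω * A ω * Y ω * (if A ω = D (L ω) then 1 else 0) / fZ (Z ω) (L ω))
      =ᵐ[μ] fun ω => (if Z ω = 1 then (1:ℝ) else 0) * (η₁ ω / fZ 1 (L ω))
        - (if Z ω = -1 then (1:ℝ) else 0) * (η₂ ω / fZ (-1) (L ω)) := by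
    filter_upwards [hconsA, hconsY] with ω hAc hYc
    rcases hZval ω with hz | hz
    · have hAA : A ω = A1 ω := by rw [hAc, hz]; norm_num
      rcases hA1val ω with ha | ha
      · have hy : Y ω = Y1 ω := by rw [hYc, hAA, ha]; norm_num
        rcases hDval (L ω) with hd | hd <;>
          · norm_num [hη₁def, hη₂def, hz, hAA, ha, hy, hd]
            try ring
      · have hy : Y ω = Ym1 ω := by rw [hYc, hAA, ha]; norm_num
        rcases hDval (L ω) with hd | hd <;>
          · norm_num [hη₁def, hη₂def, hz, hAA, ha, hy, hd]
            try ring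
    · have hAA : A ω = Am1 ω := by rw [hAc, hz]; norm_num
      rcases hAm1val ω with ha | ha
      · have hy : Y ω = Y1 ω := by rw [hYc, hAA, ha]; norm_num
        rcases hDval (L ω) with hd | hd <;>
          · norm_num [hη₁def, hη₂def, hz, hAA, ha, hy, hd]
            try ring
      · have hy : Y ω = Ym1 ω := by rw [hYc, hAA, ha]; norm_num
        rcases hDval (L ω) with hd | hd <;>
          · norm_num [hη₁def, hη₂def, hz, hAA, ha, hy, hd]
            try ring
  -- measurability of the contrast functions
  have hDLm : Measurable fun ω => D (L ω) := hD.comp hL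
  have hη₁meas : Measurable η₁ := by
    rw [hη₁def]
    exact (((hiteM A1 1 hA1).mul (hiteM _ 1 hDLm)).mul hY1m).sub
      (((hiteM A1 (-1) hA1).mul (hiteM _ (-1) hDLm)).mul hYm1m)
  have hη₂meas : Measurable η₂ := by
    rw [hη₂def]
    exact (((hiteM Am1 1 hAm1).mul (hiteM _ 1 hDLm)).mul hY1m).sub
      (((hiteM Am1 (-1) hAm1).mul (hiteM _ (-1) hDLm)).mul hYm1m)
  -- measurability with respect to the pair σ-algebra
  have hP : Measurable[mOf (fun ω => ((A1 ω, Am1 ω, Y1 ω, Ym1 ω), L ω))]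
      (fun ω => ((A1 ω, Am1 ω, Y1 ω, Ym1 ω), L ω)) := fun s hs => ⟨s, hs, rfl⟩
  have hA1P : Measurable[mOf (fun ω => ((A1 ω, Am1 ω, Y1 ω, Ym1 ω), L ω))] A1 :=
    measurable_fst.comp (measurable_fst.comp hP)
  have hAm1P : Measurable[mOf (fun ω => ((A1 ω, Am1 ω, Y1 ω, Ym1 ω), L ω))] Am1 :=
    measurable_fst.comp (measurable_snd.comp (measurable_fst.comp hP))
  have hY1P : Measurable[mOf (fun ω => ((A1 ω, Am1 ω, Y1 ω, Ym1 ω), L ω))] Y1 :=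
    measurable_fst.comp (measurable_snd.comp (measurable_snd.comp (measurable_fst.comp hP)))
  have hYm1P : Measurable[mOf (fun ω => ((A1 ω, Am1 ω, Y1 ω, Ym1 ω), L ω))] Ym1 :=
    measurable_snd.comp (measurable_snd.comp (measurable_snd.comp (measurable_fst.comp hP)))
  have hLP : Measurable[mOf (fun ω => ((A1 ω, Am1 ω, Y1 ω, Ym1 ω), L ω))] L :=
    measurable_snd.comp hP
  have hDLP : Measurable[mOf (fun ω => ((A1 ω, Am1 ω, Y1 ω, Ym1 ω), L ω))]
      fun ω => D (L ω) := hD.comp hLP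
  have hξ₁P : Measurable[mOf (fun ω => ((A1 ω, Am1 ω, Y1 ω, Ym1 ω), L ω))]
      fun ω => η₁ ω / fZ 1 (L ω) := by
    rw [hη₁def]
    exact ((((hiteM A1 1 hA1P).mul (hiteM _ 1 hDLP)).mul hY1P).sub
      (((hiteM A1 (-1) hA1P).mul (hiteM _ (-1) hDLP)).mul hYm1P)).div
      ((hfZmeas 1).comp hLP)
  have hξ₂P : Measurable[mOf (fun ω => ((A1 ω, Am1 ω, Y1 ω, Ym1 ω), L ω))]
      fun ω => η₂ ω / fZ (-1) (L ω) := by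
    rw [hη₂def]
    exact ((((hiteM Am1 1 hAm1P).mul (hiteM _ 1 hDLP)).mul hY1P).sub
      (((hiteM Am1 (-1) hAm1P).mul (hiteM _ (-1) hDLP)).mul hYm1P)).div
      ((hfZmeas (-1)).comp hLP)
  -- integrability
  have habs : ∀ ω, |Y1 ω| + |Ym1 ω| ≥ 0 := fun ω => by positivity
  have hη₁int : Integrable η₁ μ := by
    rw [hη₁def]
    refine (Integrable.bdd_mul hY1int
        (((hiteM A1 1 hA1).mul (hiteM _ 1 hDLm)).aestronglyMeasurable) (c := 1) (Filter.Eventually.of_forall fun x => ?_)).sub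
      (Integrable.bdd_mul hYm1int
        (((hiteM A1 (-1) hA1).mul (hiteM _ (-1) hDLm)).aestronglyMeasurable) (c := 1) (Filter.Eventually.of_forall fun x => ?_))
    · by_cases h1 : A1 x = 1 <;> by_cases h2 : D (L x) = 1 <;> simp [h1, h2]
    · by_cases h1 : A1 x = -1 <;> by_cases h2 : D (L x) = -1 <;> simp [h1, h2]
  have hη₂int : Integrable η₂ μ := by
    rw [hη₂def]
    refine (Integrable.bdd_mul hY1int
        (((hiteM Am1 1 hAm1).mul (hiteM _ 1 hDLm)).aestronglyMeasurable) (c := 1) (Filter.Eventually.of_forall fun x => ?_)).sub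
      (Integrable.bdd_mul hYm1int
        (((hiteM Am1 (-1) hAm1).mul (hiteM _ (-1) hDLm)).aestronglyMeasurable) (c := 1) (Filter.Eventually.of_forall fun x => ?_))
    · by_cases h1 : Am1 x = 1 <;> by_cases h2 : D (L x) = 1 <;> simp [h1, h2]
    · by_cases h1 : Am1 x = -1 <;> by_cases h2 : D (L x) = -1 <;> simp [h1, h2]
  have hbη₁ : ∀ᵐ ω ∂μ, |η₁ ω| ≤ |Y1 ω| + |Ym1 ω| := by
    refine Filter.Eventually.of_forall fun ω => ?_
    rcases hA1val ω with ha | ha <;> rcases hDval (L ω) with hd | hd <;>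
      · norm_num [hη₁def, ha, hd, abs_neg]
        try linarith [abs_nonneg (Y1 ω), abs_nonneg (Ym1 ω)]
  have hbη₂ : ∀ᵐ ω ∂μ, |η₂ ω| ≤ |Y1 ω| + |Ym1 ω| := by
    refine Filter.Eventually.of_forall fun ω => ?_
    rcases hAm1val ω with ha | ha <;> rcases hDval (L ω) with hd | hd <;>
      · norm_num [hη₂def, ha, hd, abs_neg]
        try linarith [abs_nonneg (Y1 ω), abs_nonneg (Ym1 ω)]
  have hξ₁int : Integrable (fun ω => (if Z ω = 1 then (1:ℝ) else 0)
      * (η₁ ω / fZ 1 (L ω))) μ := by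
    refine Integrable.mono' ((hY1int.abs.add hYm1int.abs).mul_const c⁻¹)
      (((hiteM Z 1 hZ).mul (hη₁meas.div ((hfZmeas 1).comp hL))).aestronglyMeasurable) ?_
    filter_upwards [hpos, hbη₁] with ω hω hb
    have hf0 : (0:ℝ) < fZ 1 (L ω) := lt_of_lt_of_le hc hω.1
    calc ‖(if Z ω = 1 then (1:ℝ) else 0) * (η₁ ω / fZ 1 (L ω))‖
        = ‖(if Z ω = 1 then (1:ℝ) else 0)‖ * (‖η₁ ω‖ / ‖fZ 1 (L ω)‖) := by
          rw [norm_mul, norm_div]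
      _ ≤ 1 * ((|Y1 ω| + |Ym1 ω|) / c) := by
          refine mul_le_mul (hiteB Z 1 ω) ?_ (by positivity) zero_le_one
          rw [Real.norm_eq_abs, Real.norm_eq_abs, abs_of_pos hf0]
          exact div_le_div₀ (habs ω) hb hc hω.1
      _ = (|Y1 ω| + |Ym1 ω|) * c⁻¹ := by rw [one_mul, div_eq_mul_inv]
  have hξ₂int : Integrable (fun ω => (if Z ω = -1 then (1:ℝ) else 0)
      * (η₂ ω / fZ (-1) (L ω))) μ := by
    refine Integrable.mono' ((hY1int.abs.add hYm1int.abs).mul_const c⁻¹)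
      (((hiteM Z (-1) hZ).mul (hη₂meas.div ((hfZmeas (-1)).comp hL))).aestronglyMeasurable) ?_
    filter_upwards [hfm1pos, hbη₂] with ω hω hb
    have hf0 : (0:ℝ) < fZ (-1) (L ω) := lt_of_lt_of_le hc hω.1
    calc ‖(if Z ω = -1 then (1:ℝ) else 0) * (η₂ ω / fZ (-1) (L ω))‖
        = ‖(if Z ω = -1 then (1:ℝ) else 0)‖ * (‖η₂ ω‖ / ‖fZ (-1) (L ω)‖) := by
          rw [norm_mul, norm_div]
      _ ≤ 1 * ((|Y1 ω| + |Ym1 ω|) / c) := by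
          refine mul_le_mul (hiteB Z (-1) ω) ?_ (by positivity) zero_le_one
          rw [Real.norm_eq_abs, Real.norm_eq_abs, abs_of_pos hf0]
          exact div_le_div₀ (habs ω) hb hc hω.1
      _ = (|Y1 ω| + |Ym1 ω|) * c⁻¹ := by rw [one_mul, div_eq_mul_inv]
  -- apply the conditional-independence lemma
  have hWmeas : Measurable fun ω => (A1 ω, Am1 ω, Y1 ω, Ym1 ω) :=
    hA1.prodMk (hAm1.prodMk (hY1m.prodMk hYm1m))
  have hML1 : ∫ ω, (if Z ω = 1 then (1:ℝ) else 0) * (η₁ ω / fZ 1 (L ω)) ∂μ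
      = ∫ ω, fZ 1 (L ω) * (η₁ ω / fZ 1 (L ω)) ∂μ :=
    CVI.main_indep_lemma μ L Z (fun ω => (A1 ω, Am1 ω, Y1 ω, Ym1 ω)) hL hZ hWmeas
      hcausal 1 (fZ 1) (hfZmeas 1) hf1 hf1nn _ hξ₁P
  have hML2 : ∫ ω, (if Z ω = -1 then (1:ℝ) else 0) * (η₂ ω / fZ (-1) (L ω)) ∂μ
      = ∫ ω, fZ (-1) (L ω) * (η₂ ω / fZ (-1) (L ω)) ∂μ :=
    CVI.main_indep_lemma μ L Z (fun ω => (A1 ω, Am1 ω, Y1 ω, Ym1 ω)) hL hZ hWmeas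
      hcausal (-1) (fZ (-1)) (hfZmeas (-1)) hfm1 hfm1nn _ hξ₂P
  have hcancel1 : (fun ω => fZ 1 (L ω) * (η₁ ω / fZ 1 (L ω))) =ᵐ[μ] η₁ := by
    filter_upwards [hpos] with ω h
    have hne : fZ 1 (L ω) ≠ 0 := ne_of_gt (lt_of_lt_of_le hc h.1)
    field_simp
  have hcancel2 : (fun ω => fZ (-1) (L ω) * (η₂ ω / fZ (-1) (L ω))) =ᵐ[μ] η₂ := by
    filter_upwards [hfm1pos] with ω h
    have hne : fZ (-1) (L ω) ≠ 0 := ne_of_gt (lt_of_lt_of_le hc h.1)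
    field_simp
  have hstep1 : ∫ ω, Z ω * A ω * Y ω * (if A ω = D (L ω) then 1 else 0) / fZ (Z ω) (L ω) ∂μ
      = ∫ ω, (η₁ ω - η₂ ω) ∂μ := by
    rw [integral_congr_ae hsplit, integral_sub hξ₁int hξ₂int, hML1, hML2,
      integral_congr_ae hcancel1, integral_congr_ae hcancel2, ← integral_sub hη₁int hη₂int]
  have hmonoC : (fun ω => η₁ ω - η₂ ω) =ᵐ[μ] fun ω =>
      ((if D (L ω) = 1 then (1:ℝ) else 0) * Y1 ω + (if D (L ω) = -1 then 1 else 0) * Ym1 ω)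
        * ((if A1 ω = 1 then (1:ℝ) else 0) * (if Am1 ω = -1 then 1 else 0)) := by
    filter_upwards [hmono] with ω hω
    rcases hA1val ω with ha | ha <;> rcases hAm1val ω with ham | ham
    · norm_num [hη₁def, hη₂def, ha, ham]
    · norm_num [hη₁def, hη₂def, ha, ham]
      try ring
    · exfalso; rw [ha, ham] at hω; linarith
    · norm_num [hη₁def, hη₂def, ha, ham]
  -- the complier indicator
  have hCm : Measurable fun ω => (if A1 ω = 1 then (1:ℝ) else 0)
      * (if Am1 ω = -1 then 1 else 0) := (hiteM A1 1 hA1).mul (hiteM Am1 (-1) hAm1)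
  have hCnn : ∀ ω, 0 ≤ (if A1 ω = 1 then (1:ℝ) else 0) * (if Am1 ω = -1 then 1 else 0) :=
    fun ω => mul_nonneg (by by_cases h : A1 ω = 1 <;> simp [h])
      (by by_cases h : Am1 ω = -1 <;> simp [h])
  have hCb : ∀ x, ‖(if A1 x = 1 then (1:ℝ) else 0) * (if Am1 x = -1 then 1 else 0)‖ ≤ 1 := by
    intro x; by_cases h1 : A1 x = 1 <;> by_cases h2 : Am1 x = -1 <;> simp [h1, h2]
  have hCint : Integrable (fun ω => (if A1 ω = 1 then (1:ℝ) else 0)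
      * (if Am1 ω = -1 then 1 else 0)) μ := hbint _ hCm hCb
  have hb1m' : Measurable[mOf L] fun ω => if D (L ω) = 1 then (1:ℝ) else 0 :=
    hiteM _ 1 (hD.comp hLm')
  have hbm1m' : Measurable[mOf L] fun ω => if D (L ω) = -1 then (1:ℝ) else 0 :=
    hiteM _ (-1) (hD.comp hLm')
  -- integrability of the potential-outcome times complier-indicator terms
  have hX1int : Integrable (fun ω => Y1 ω * ((if A1 ω = 1 then (1:ℝ) else 0)
      * (if Am1 ω = -1 then 1 else 0))) μ :=
    (Integrable.bdd_mul hY1int hCm.aestronglyMeasurable (c := 1) (Filter.Eventually.of_forall hCb)).congr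
      (Filter.Eventually.of_forall fun ω => mul_comm _ _)
  have hXm1int : Integrable (fun ω => Ym1 ω * ((if A1 ω = 1 then (1:ℝ) else 0)
      * (if Am1 ω = -1 then 1 else 0))) μ :=
    (Integrable.bdd_mul hYm1int hCm.aestronglyMeasurable (c := 1) (Filter.Eventually.of_forall hCb)).congr
      (Filter.Eventually.of_forall fun ω => mul_comm _ _)
  have hb1X1int : Integrable (fun ω => (if D (L ω) = 1 then (1:ℝ) else 0)
      * (Y1 ω * ((if A1 ω = 1 then (1:ℝ) else 0) * (if Am1 ω = -1 then 1 else 0)))) μ :=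
    Integrable.bdd_mul hX1int (hiteM _ 1 hDLm).aestronglyMeasurable (c := 1) (Filter.Eventually.of_forall (hiteB _ 1))
  have hbm1Xm1int : Integrable (fun ω => (if D (L ω) = -1 then (1:ℝ) else 0)
      * (Ym1 ω * ((if A1 ω = 1 then (1:ℝ) else 0) * (if Am1 ω = -1 then 1 else 0)))) μ :=
    Integrable.bdd_mul hXm1int (hiteM _ (-1) hDLm).aestronglyMeasurable (c := 1) (Filter.Eventually.of_forall (hiteB _ (-1)))
  -- pull-out chains
  have hk1 : Measurable[mOf L] fun ω => (if D (L ω) = 1 then (1:ℝ) else 0) * gY1C (L ω) :=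
    hb1m'.mul (hgY1Cm.comp hLm')
  have hkm1 : Measurable[mOf L] fun ω => (if D (L ω) = -1 then (1:ℝ) else 0) * gYm1C (L ω) :=
    hbm1m'.mul (hgYm1Cm.comp hLm')
  have hk1pint : Integrable (fun ω => ((if D (L ω) = 1 then (1:ℝ) else 0) * gY1C (L ω))
      * (μ[(fun ω' => (if A1 ω' = 1 then (1:ℝ) else 0)
          * (if Am1 ω' = -1 then 1 else 0)) | mOf L]) ω) μ := by
    refine (Integrable.bdd_mul (integrable_condExp (m := mOf L) (f := (fun ω' => Y1 ω' * ((if A1 ω' = 1 then (1:ℝ) else 0) * (if Am1 ω' = -1 then 1 else 0)))))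
      (hiteM _ 1 hDLm).aestronglyMeasurable (c := 1) (Filter.Eventually.of_forall (hiteB _ 1))).congr ?_
    filter_upwards [hgY1C] with ω h
    rw [h]; ring
  have hkm1pint : Integrable (fun ω => ((if D (L ω) = -1 then (1:ℝ) else 0) * gYm1C (L ω))
      * (μ[(fun ω' => (if A1 ω' = 1 then (1:ℝ) else 0)
          * (if Am1 ω' = -1 then 1 else 0)) | mOf L]) ω) μ := by
    refine (Integrable.bdd_mul (integrable_condExp (m := mOf L) (f := (fun ω' => Ym1 ω' * ((if A1 ω' = 1 then (1:ℝ) else 0) * (if Am1 ω' = -1 then 1 else 0)))))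
      (hiteM _ (-1) hDLm).aestronglyMeasurable (c := 1) (Filter.Eventually.of_forall (hiteB _ (-1)))).congr ?_
    filter_upwards [hgYm1C] with ω h
    rw [h]; ring
  have hk1Cint : Integrable (fun ω => ((if D (L ω) = 1 then (1:ℝ) else 0) * gY1C (L ω))
      * ((if A1 ω = 1 then (1:ℝ) else 0) * (if Am1 ω = -1 then 1 else 0))) μ :=
    CVI.pullout_integrable hm' _ _ hk1 hCm hCnn hCint hk1pint
  have hkm1Cint : Integrable (fun ω => ((if D (L ω) = -1 then (1:ℝ) else 0) * gYm1C (L ω))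
      * ((if A1 ω = 1 then (1:ℝ) else 0) * (if Am1 ω = -1 then 1 else 0))) μ :=
    CVI.pullout_integrable hm' _ _ hkm1 hCm hCnn hCint hkm1pint
  have hJ1 : ∫ ω, (if D (L ω) = 1 then (1:ℝ) else 0)
        * (Y1 ω * ((if A1 ω = 1 then (1:ℝ) else 0) * (if Am1 ω = -1 then 1 else 0))) ∂μ
      = ∫ ω, ((if D (L ω) = 1 then (1:ℝ) else 0) * gY1C (L ω))
        * ((if A1 ω = 1 then (1:ℝ) else 0) * (if Am1 ω = -1 then 1 else 0)) ∂μ := by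
    have e1 := CVI.integral_mul_condexp hm'
      (fun ω => if D (L ω) = 1 then (1:ℝ) else 0)
      (fun ω => Y1 ω * ((if A1 ω = 1 then (1:ℝ) else 0) * (if Am1 ω = -1 then 1 else 0)))
      hb1m'.stronglyMeasurable hX1int hb1X1int
    have e2 : ∫ ω, (if D (L ω) = 1 then (1:ℝ) else 0)
          * (μ[(fun ω' => Y1 ω' * ((if A1 ω' = 1 then (1:ℝ) else 0) * (if Am1 ω' = -1 then 1 else 0))) | mOf L]) ω ∂μ
        = ∫ ω, ((if D (L ω) = 1 then (1:ℝ) else 0) * gY1C (L ω))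
          * (μ[(fun ω' => (if A1 ω' = 1 then (1:ℝ) else 0) * (if Am1 ω' = -1 then 1 else 0)) | mOf L]) ω ∂μ := by
      refine integral_congr_ae ?_
      filter_upwards [hgY1C] with ω h
      rw [h]; ring
    have e3 := (CVI.pullout_integral hm'
      (fun ω => (if D (L ω) = 1 then (1:ℝ) else 0) * gY1C (L ω))
      (fun ω => (if A1 ω = 1 then (1:ℝ) else 0) * (if Am1 ω = -1 then 1 else 0))
      hk1 hCm hCnn hCint).symm
    exact e1.trans (e2.trans e3)
  have hJm1 : ∫ ω, (if D (L ω) = -1 then (1:ℝ) else 0)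
        * (Ym1 ω * ((if A1 ω = 1 then (1:ℝ) else 0) * (if Am1 ω = -1 then 1 else 0))) ∂μ
      = ∫ ω, ((if D (L ω) = -1 then (1:ℝ) else 0) * gYm1C (L ω))
        * ((if A1 ω = 1 then (1:ℝ) else 0) * (if Am1 ω = -1 then 1 else 0)) ∂μ := by
    have e1 := CVI.integral_mul_condexp hm'
      (fun ω => if D (L ω) = -1 then (1:ℝ) else 0)
      (fun ω => Ym1 ω * ((if A1 ω = 1 then (1:ℝ) else 0) * (if Am1 ω = -1 then 1 else 0)))
      hbm1m'.stronglyMeasurable hXm1int hbm1Xm1int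
    have e2 : ∫ ω, (if D (L ω) = -1 then (1:ℝ) else 0)
          * (μ[(fun ω' => Ym1 ω' * ((if A1 ω' = 1 then (1:ℝ) else 0) * (if Am1 ω' = -1 then 1 else 0))) | mOf L]) ω ∂μ
        = ∫ ω, ((if D (L ω) = -1 then (1:ℝ) else 0) * gYm1C (L ω))
          * (μ[(fun ω' => (if A1 ω' = 1 then (1:ℝ) else 0) * (if Am1 ω' = -1 then 1 else 0)) | mOf L]) ω ∂μ := by
      refine integral_congr_ae ?_
      filter_upwards [hgYm1C] with ω h
      rw [h]; ring
    have e3 := (CVI.pullout_integral hm'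
      (fun ω => (if D (L ω) = -1 then (1:ℝ) else 0) * gYm1C (L ω))
      (fun ω => (if A1 ω = 1 then (1:ℝ) else 0) * (if Am1 ω = -1 then 1 else 0))
      hkm1 hCm hCnn hCint).symm
    exact e1.trans (e2.trans e3)
  -- identification of the value function integrand
  have hT'I : ∫ ω, ((if D (L ω) = 1 then (1:ℝ) else 0) * Y1 ω
        + (if D (L ω) = -1 then 1 else 0) * Ym1 ω)
        * ((if A1 ω = 1 then (1:ℝ) else 0) * (if Am1 ω = -1 then 1 else 0)) ∂μ
      = ∫ ω, ((if D (L ω) = 1 then (1:ℝ) else 0) * gY1C (L ω)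
          + (if D (L ω) = -1 then 1 else 0) * gYm1C (L ω)) *
          ((if A1 ω = 1 then (1:ℝ) else 0) * (if Am1 ω = -1 then 1 else 0)) ∂μ := by
    rw [show (fun ω => ((if D (L ω) = 1 then (1:ℝ) else 0) * Y1 ω
          + (if D (L ω) = -1 then 1 else 0) * Ym1 ω)
          * ((if A1 ω = 1 then (1:ℝ) else 0) * (if Am1 ω = -1 then 1 else 0)))
        = fun ω => (if D (L ω) = 1 then (1:ℝ) else 0)
            * (Y1 ω * ((if A1 ω = 1 then (1:ℝ) else 0) * (if Am1 ω = -1 then 1 else 0)))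
          + (if D (L ω) = -1 then (1:ℝ) else 0)
            * (Ym1 ω * ((if A1 ω = 1 then (1:ℝ) else 0) * (if Am1 ω = -1 then 1 else 0)))
        from funext fun ω => by ring,
      integral_add hb1X1int hbm1Xm1int, hJ1, hJm1, ← integral_add hk1Cint hkm1Cint]
    refine integral_congr_ae (Filter.Eventually.of_forall fun ω => ?_)
    ring
  have KEY : ∫ ω, Z ω * A ω * Y ω * (if A ω = D (L ω) then 1 else 0) / fZ (Z ω) (L ω) ∂μ
      = ∫ ω, ((if D (L ω) = 1 then (1:ℝ) else 0) * gY1C (L ω)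
          + (if D (L ω) = -1 then 1 else 0) * gYm1C (L ω)) *
          ((if A1 ω = 1 then (1:ℝ) else 0) * (if Am1 ω = -1 then 1 else 0)) ∂μ :=
    hstep1.trans ((integral_congr_ae hmonoC).trans hT'I)
  have hPCne : (∫ ω, (if A1 ω = 1 then (1:ℝ) else 0) * (if Am1 ω = -1 then 1 else 0) ∂μ)
      ≠ 0 := ne_of_gt hPC
  constructor
  · rw [KEY, ← mul_div_assoc, mul_div_cancel_left₀ _ hPCne]
  · rw [show (fun ω => Z ω * A ω * Y ω * (if A ω = D (L ω) then 1 else 0) /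
          ((∫ ω', (if A1 ω' = 1 then (1:ℝ) else 0) * (if Am1 ω' = -1 then 1 else 0) ∂μ) *
            fZ (Z ω) (L ω)))
        = fun ω => (Z ω * A ω * Y ω * (if A ω = D (L ω) then 1 else 0) / fZ (Z ω) (L ω)) /
            (∫ ω', (if A1 ω' = 1 then (1:ℝ) else 0) * (if Am1 ω' = -1 then 1 else 0) ∂μ)
        from funext fun ω => by ring,
      integral_div, KEY]
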